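/- arXiv:2112.10867 — 3 statements merged into one kernel-verified Lean document; each statement's English description precedes it below -/
import Mathlib

section
/- For any density matrix ρ on an N-dimensional Hilbert space, the minimum quantum relative entropy S(ρ‖δ) over all states δ diagonal in a fixed orthonormal basis equals S(Δ(ρ)) − S(ρ), where Δ(ρ) is the diagonal (dephased) part of ρ, and the minimum is attained at δ = Δ(ρ). -/
open Matrix BigOperators ComplexOrder

/-- von Neumann entropy `S(ρ) = -Tr ρ log ρ` via the eigenvalues of a Hermitian matrix. -/
noncomputable def vnEntropy {N : ℕ} (ρ : Matrix (Fin N) (Fin N) ℂ) (h : ρ.IsHermitian) : ℝ :=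
  -∑ i, h.eigenvalues i * Real.log (h.eigenvalues i)

/-- Quantum relative entropy `S(ρ‖δ) = Tr ρ log ρ - Tr ρ log δ` where `δ` is the
incoherent (diagonal) state with diagonal entries `d`. -/
noncomputable def relEntropyToDiag {N : ℕ} (ρ : Matrix (Fin N) (Fin N) ℂ) (h : ρ.IsHermitian)
    (d : Fin N → ℝ) : ℝ :=
  (∑ i, h.eigenvalues i * Real.log (h.eigenvalues i)) - ∑ μ, (ρ μ μ).re * Real.log (d μ)

/-- Pointwise Gibbs inequality: `p log p - p log d ≥ p - d`. -/
lemma gibbs_pointwise {p d : ℝ} (hp : 0 ≤ p) (hd : 0 ≤ d) (h0 : d = 0 → p = 0) :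
    p - d ≤ p * Real.log p - p * Real.log d := by
  rcases eq_or_lt_of_le hp with h | h
  · simp [← h]; linarith [hd]
  rcases eq_or_lt_of_le hd with h' | h'
  · exact absurd (h0 h'.symm) (ne_of_gt h)
  have := Real.log_le_sub_one_of_pos (show 0 < d / p by positivity)
  rw [Real.log_div (ne_of_gt h') (ne_of_gt h)] at this
  have h2 := mul_le_mul_of_nonneg_left this h.le
  have h3 : p * (d / p) = d := by field_simp
  rw [mul_sub, mul_sub, h3] at h2
  linarith

/-- The minimum of `S(ρ‖δ)` over incoherent states `δ` (whose support contains that of `Δ(ρ)`)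
equals `S(Δ(ρ)) - S(ρ)`, and is attained at `δ = Δ(ρ)`. -/
theorem stmt0 {N : ℕ} (ρ : Matrix (Fin N) (Fin N) ℂ) (hρ : ρ.PosSemidef)
    (htr : ρ.trace = 1) :
    IsLeast {x : ℝ | ∃ d : Fin N → ℝ, (∀ μ, 0 ≤ d μ) ∧ (∑ μ, d μ) = 1 ∧
        (∀ μ, d μ = 0 → (ρ μ μ).re = 0) ∧ x = relEntropyToDiag ρ hρ.1 d}
      ((-∑ μ, (ρ μ μ).re * Real.log ((ρ μ μ).re)) - vnEntropy ρ hρ.1) ∧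
    relEntropyToDiag ρ hρ.1 (fun μ => (ρ μ μ).re)
      = (-∑ μ, (ρ μ μ).re * Real.log ((ρ μ μ).re)) - vnEntropy ρ hρ.1 := by
  have hdiag : ∀ μ, 0 ≤ (ρ μ μ).re := by
    intro μ
    have h1 : (0:ℂ) ≤ ρ μ μ := by
      have := hρ.dotProduct_mulVec_nonneg (Pi.single μ 1)
      simpa [dotProduct, Pi.single_apply, Matrix.mulVec] using this
    exact (Complex.le_def.mp h1).1
  have hsum : (∑ μ, (ρ μ μ).re) = 1 := by
    have : (ρ.trace).re = 1 := by rw [htr]; simp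
    simpa [Matrix.trace, Matrix.diag, Complex.re_sum] using this
  have hattain : relEntropyToDiag ρ hρ.1 (fun μ => (ρ μ μ).re)
      = (-∑ μ, (ρ μ μ).re * Real.log ((ρ μ μ).re)) - vnEntropy ρ hρ.1 := by
    simp only [relEntropyToDiag, vnEntropy]
    ring
  refine ⟨⟨⟨fun μ => (ρ μ μ).re, hdiag, hsum, fun μ h => h, hattain.symm⟩, ?_⟩, hattain⟩
  rintro x ⟨d, hd0, hd1, hsupp, rfl⟩
  simp only [relEntropyToDiag, vnEntropy]
  have key : ∑ μ, ((ρ μ μ).re * Real.log ((ρ μ μ).re) - (ρ μ μ).re * Real.log (d μ)) ≥ 0 := by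
    calc ∑ μ, ((ρ μ μ).re * Real.log ((ρ μ μ).re) - (ρ μ μ).re * Real.log (d μ))
        ≥ ∑ μ, ((ρ μ μ).re - d μ) := by
          apply Finset.sum_le_sum
          intro μ _
          exact gibbs_pointwise (hdiag μ) (hd0 μ) (hsupp μ)
      _ = 0 := by rw [Finset.sum_sub_distrib, hsum, hd1]; ring
  rw [Finset.sum_sub_distrib] at key
  linarith
end

section
/- Let Λ be the linear map on N×N matrices defined by Λ(ρ)_{μμ} = ρ_{μμ} and Λ(ρ)_{μν} = (1+α) ρ_{μν} for μ ≠ ν, where α ∈ ℝ. Then Λ is completely positive and trace preserving if and only if α ∈ [−N/(N−1), 0]. -/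
open Matrix BigOperators ComplexOrder

/-- The uniform dephasing-type map: diagonal entries preserved, off-diagonal entries
multiplied by `1 + α`. -/
noncomputable def dephasingMap {N : ℕ} (α : ℝ) (ρ : Matrix (Fin N) (Fin N) ℂ) :
    Matrix (Fin N) (Fin N) ℂ :=
  Matrix.of fun μ ν => if μ = ν then ρ μ ν else (1 + (α : ℂ)) * ρ μ ν

/-- The Choi matrix `J_Λ = ∑_{μν} |μ⟩⟨ν| ⊗ Λ(|μ⟩⟨ν|)` of the map. -/
noncomputable def choiMatrix {N : ℕ} (Λ : Matrix (Fin N) (Fin N) ℂ → Matrix (Fin N) (Fin N) ℂ) :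
    Matrix (Fin N × Fin N) (Fin N × Fin N) ℂ :=
  Matrix.of fun p q => (Λ (Matrix.single p.1 q.1 1)) p.2 q.2

lemma choi_apply {N : ℕ} (α : ℝ) (p q : Fin N × Fin N) :
    choiMatrix (dephasingMap (N:=N) α) p q =
      if p.1 = p.2 ∧ q.1 = q.2 then (if p.1 = q.1 then 1 else 1 + (α:ℂ)) else 0 := by
  simp only [choiMatrix, dephasingMap, Matrix.single, Matrix.of_apply]
  rcases p with ⟨μ, a⟩; rcases q with ⟨ν, b⟩
  by_cases h1 : μ = a <;> by_cases h2 : ν = b <;> by_cases h3 : a = b <;> simp_all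

lemma quad {N : ℕ} (α : ℝ) (x : Fin N × Fin N → ℂ) :
    star x ⬝ᵥ (choiMatrix (dephasingMap (N:=N) α)).mulVec x =
      (((1 + α) * Complex.normSq (∑ μ, x (μ, μ)) +
        (-α) * ∑ μ, Complex.normSq (x (μ, μ)) : ℝ) : ℂ) := by
  have key : ∀ p q, choiMatrix (dephasingMap (N:=N) α) p q =
      (if p.1 = p.2 then 1 else 0) * (if q.1 = q.2 then 1 else 0) *
        ((1 + (α:ℂ)) - (if p.1 = q.1 then (α:ℂ) else 0)) := by
    intro p q
    rw [choi_apply]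
    by_cases h1 : p.1 = p.2 <;> by_cases h2 : q.1 = q.2 <;> by_cases h3 : p.1 = q.1 <;>
      simp_all
  simp only [dotProduct, mulVec, Pi.star_apply, key]
  rw [Fintype.sum_prod_type]
  simp only [Fintype.sum_prod_type]
  push_cast
  simp only [Complex.normSq_eq_conj_mul_self, map_sum, Finset.mul_sum, Finset.sum_mul]
  simp only [ite_mul, mul_ite, one_mul, zero_mul, mul_zero, mul_one]
  rw [Finset.sum_comm]
  simp only [Finset.sum_ite_eq, Finset.sum_ite_eq', Finset.mem_univ, if_true]
  simp only [mul_sub, sub_mul, mul_ite, ite_mul, mul_zero, zero_mul, Finset.sum_sub_distrib,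
    Finset.sum_ite_eq, Finset.sum_ite_eq', Finset.mem_univ, if_true]
  refine Eq.trans (Finset.sum_congr rfl fun y _ => Finset.sum_comm) ?_
  simp only [Finset.sum_ite_eq', Finset.mem_univ, if_true, Finset.sum_sub_distrib,
    Finset.sum_ite_eq, Complex.star_def]
  rw [sub_eq_add_neg, ← Finset.sum_neg_distrib]
  congr 1
  · rw [Finset.sum_comm]
    exact Finset.sum_congr rfl fun i _ => Finset.sum_congr rfl fun j _ => by ring
  · exact Finset.sum_congr rfl fun i _ => by ring

lemma herm {N : ℕ} (α : ℝ) : (choiMatrix (dephasingMap (N:=N) α)).IsHermitian := by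
  ext p q
  simp only [conjTranspose_apply, choi_apply]
  by_cases h1 : p.1 = p.2 <;> by_cases h2 : q.1 = q.2 <;> by_cases h3 : p.1 = q.1 <;>
    simp_all [eq_comm, Complex.ext_iff]

/-- `Λ` with `Λ(ρ)_{μμ} = ρ_{μμ}`, `Λ(ρ)_{μν} = (1+α)ρ_{μν}` (μ≠ν) is CPTP
iff `α ∈ [-N/(N-1), 0]`. -/
theorem stmt2 {N : ℕ} (hN : 2 ≤ N) (α : ℝ) :
    ((choiMatrix (dephasingMap (N := N) α)).PosSemidef ∧
      ∀ ρ : Matrix (Fin N) (Fin N) ℂ, (dephasingMap α ρ).trace = ρ.trace)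
    ↔ α ∈ Set.Icc (-(N : ℝ) / ((N : ℝ) - 1)) 0 := by
  have hNR : (2:ℝ) ≤ (N:ℝ) := by exact_mod_cast hN
  have hN1 : (0:ℝ) < (N:ℝ) - 1 := by linarith
  constructor
  · rintro ⟨hPSD, -⟩
    have i : Fin N := ⟨0, by omega⟩
    have j : Fin N := ⟨1, by omega⟩
    constructor
    · -- lower bound via all-ones diagonal vector
      have h := hPSD.dotProduct_mulVec_nonneg (fun p => if p.1 = p.2 then 1 else 0)
      rw [quad, Complex.zero_le_real] at h
      simp only [if_pos rfl, Finset.sum_const, Finset.card_univ, Fintype.card_fin,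
        nsmul_eq_mul, mul_one, Complex.normSq_natCast, Complex.normSq_one, if_true] at h
      rw [div_le_iff₀ hN1]
      nlinarith [h]
    · -- upper bound via difference vector
      set i : Fin N := ⟨0, by omega⟩ with hi
      set j : Fin N := ⟨1, by omega⟩ with hj
      have hij : i ≠ j := by simp [hi, hj, Fin.ext_iff]
      have h := hPSD.dotProduct_mulVec_nonneg (fun p => if p.1 = i ∧ p.2 = i then 1 else
        if p.1 = j ∧ p.2 = j then (-1) else 0)
      rw [quad, Complex.zero_le_real] at h
      have e1 : (∑ μ : Fin N, (if (μ, μ).1 = i ∧ (μ, μ).2 = i then (1:ℂ) else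
          if (μ, μ).1 = j ∧ (μ, μ).2 = j then (-1) else 0)) = 0 := by
        simp only [and_self]
        have : ∀ μ : Fin N, (if μ = i then (1:ℂ) else if μ = j then (-1) else 0)
            = (if μ = i then 1 else 0) + (if μ = j then (-1) else 0) := by
          intro μ
          by_cases h1 : μ = i <;> by_cases h2 : μ = j <;> simp_all
        simp only [this, Finset.sum_add_distrib, Finset.sum_ite_eq', Finset.mem_univ, if_true]
        ring
      have e2 : (∑ μ : Fin N, Complex.normSq (if (μ, μ).1 = i ∧ (μ, μ).2 = i then (1:ℂ) else
          if (μ, μ).1 = j ∧ (μ, μ).2 = j then (-1) else 0)) = 2 := by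
        simp only [and_self]
        have : ∀ μ : Fin N, Complex.normSq (if μ = i then (1:ℂ) else if μ = j then (-1) else 0)
            = (if μ = i then 1 else 0) + (if μ = j then 1 else 0) := by
          intro μ
          by_cases h1 : μ = i <;> by_cases h2 : μ = j <;> simp_all
        simp only [this, Finset.sum_add_distrib, Finset.sum_ite_eq', Finset.mem_univ, if_true]
        ring
      rw [e1, e2] at h
      simp only [Complex.normSq_zero, mul_zero, zero_add] at h
      linarith
  · rintro ⟨h1, h2⟩
    have h1' : -(N:ℝ) ≤ α * ((N:ℝ) - 1) := by
      rw [div_le_iff₀ hN1] at h1; linarith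
    refine ⟨PosSemidef.of_dotProduct_mulVec_nonneg (herm α) fun x => ?_, fun ρ => ?_⟩
    · rw [quad, Complex.zero_le_real]
      set S := ∑ μ : Fin N, x (μ, μ) with hS
      set T := ∑ μ : Fin N, Complex.normSq (x (μ, μ)) with hT
      have hTnn : 0 ≤ T := Finset.sum_nonneg fun _ _ => Complex.normSq_nonneg _
      have hCS : Complex.normSq S ≤ (N:ℝ) * T := by
        have h3 : ‖S‖ ≤ ∑ μ : Fin N, ‖x (μ, μ)‖ := norm_sum_le _ _
        have h4 : (∑ μ : Fin N, ‖x (μ, μ)‖ * 1) ^ 2 ≤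
            (∑ μ : Fin N, ‖x (μ, μ)‖ ^ 2) * ∑ μ : Fin N, (1:ℝ) ^ 2 :=
          Finset.sum_mul_sq_le_sq_mul_sq _ _ _
        simp only [mul_one, one_pow, Finset.sum_const, Finset.card_univ, Fintype.card_fin,
          nsmul_eq_mul, mul_one] at h4
        have h5 : Complex.normSq S = ‖S‖ ^ 2 := (Complex.sq_norm S).symm
        have h6 : T = ∑ μ : Fin N, ‖x (μ, μ)‖ ^ 2 := by
          rw [hT]; exact Finset.sum_congr rfl fun μ _ => (Complex.sq_norm _).symm
        rw [h5, h6]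
        calc ‖S‖ ^ 2 ≤ (∑ μ : Fin N, ‖x (μ, μ)‖) ^ 2 := by
              apply sq_le_sq' <;> nlinarith [norm_nonneg S,
                Finset.sum_nonneg (fun μ (_ : μ ∈ Finset.univ) => norm_nonneg (x (μ, μ)))]
          _ ≤ (∑ μ : Fin N, ‖x (μ, μ)‖ ^ 2) * (N:ℝ) := h4
          _ = (N:ℝ) * ∑ μ : Fin N, ‖x (μ, μ)‖ ^ 2 := mul_comm _ _
      rcases le_or_gt (-1) α with hα | hα
      · have := Complex.normSq_nonneg S
        nlinarith
      · have e1 : 0 ≤ (-(1+α)) * ((N:ℝ) * T - Complex.normSq S) :=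
          mul_nonneg (by linarith) (by linarith)
        have e2 : 0 ≤ T * ((N:ℝ) + α * ((N:ℝ) - 1)) := mul_nonneg hTnn (by linarith)
        nlinarith [e1, e2]
    · simp [Matrix.trace, dephasingMap, Matrix.diag]
end

section
/- Let Λ and Λ_ε be the dephasing-type maps with uniform parameter α (and γ = 0 for Λ_ε), whose Choi matrices differ by the diagonal matrix D = J_{Λ_ε} − J_Λ having entries −ε at positions (μμ,μμ) and ε/(N−1) at positions (μν,μν) for μ≠ν. Then the diamond distance between Λ and Λ_ε equals ε. In particular, the SDP min{λ : Z ≥ D, λI ≥ Tr_B(Z), Z ≥ 0} has optimal value ε. -/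
open Matrix BigOperators ComplexOrder

/-- Partial trace over the second tensor factor. -/
noncomputable def ptrB {N : ℕ} (X : Matrix (Fin N × Fin N) (Fin N × Fin N) ℂ) :
    Matrix (Fin N) (Fin N) ℂ :=
  Matrix.of fun μ ν => ∑ a, X (μ, a) (ν, a)

/-- The diagonal difference `D = J_{Λ_ε} - J_Λ` of the Choi matrices: entries `-ε` at
positions `(μμ,μμ)` and `ε/(N-1)` at positions `(μν,μν)` for `μ ≠ ν`. -/
noncomputable def choiDiff (N : ℕ) (ε : ℝ) : Matrix (Fin N × Fin N) (Fin N × Fin N) ℂ :=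
  Matrix.diagonal fun p => if p.1 = p.2 then (-ε : ℂ) else ((ε / ((N : ℝ) - 1) : ℝ) : ℂ)

lemma diag_nonneg' {n : Type*} [Fintype n] [DecidableEq n] {M : Matrix n n ℂ}
    (h : M.PosSemidef) (i : n) : 0 ≤ M i i := by
  exact h.diag_nonneg

lemma Ncast_ne {N : ℕ} (hN : 2 ≤ N) : ((N : ℂ)) - 1 ≠ 0 := by
  have h1 : ((N : ℂ)) - 1 = ((N - 1 : ℕ) : ℂ) := by
    push_cast [Nat.cast_sub (by omega : 1 ≤ N)]; ring
  rw [h1]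
  exact Nat.cast_ne_zero.mpr (Nat.sub_ne_zero_of_lt (by omega))

lemma key_sum {N : ℕ} (hN : 2 ≤ N) (ε : ℝ) (μ : Fin N) :
    ∑ a : Fin N, (if μ = a then (0:ℂ) else (ε : ℂ) / ((N : ℂ) - 1)) = (ε : ℂ) := by
  set c : ℂ := (ε : ℂ) / ((N : ℂ) - 1) with hc
  have h1 : ∀ a : Fin N, (if μ = a then (0:ℂ) else c) = c - (if μ = a then c else 0) := by
    intro a; by_cases h : μ = a <;> simp [h]
  rw [Finset.sum_congr rfl (fun a _ => h1 a), Finset.sum_sub_distrib,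
    Finset.sum_ite_eq Finset.univ μ (fun _ => c)]
  simp only [Finset.mem_univ, if_true, Finset.sum_const, Finset.card_univ, Fintype.card_fin,
    nsmul_eq_mul]
  rw [hc]
  field_simp [Ncast_ne hN]

lemma hcc {N : ℕ} (ε : ℝ) : ((ε / ((N : ℝ) - 1) : ℝ) : ℂ) = (ε : ℂ) / ((N : ℂ) - 1) := by
  push_cast; ring

/-- The SDP `min{λ : Z ≥ J_{Λ_ε} - J_Λ, λ·I ≥ Tr_B(Z), Z ≥ 0}` computing the diamond
distance between `Λ` and `Λ_ε` has optimal value `ε`: the diamond distance equals `ε`. -/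
theorem stmt13 {N : ℕ} (hN : 2 ≤ N) (ε : ℝ) (hε : ε ∈ Set.Icc (0 : ℝ) 1) :
    IsLeast {lam : ℝ | ∃ Z : Matrix (Fin N × Fin N) (Fin N × Fin N) ℂ,
        (Z - choiDiff N ε).PosSemidef ∧
        ((lam : ℂ) • (1 : Matrix (Fin N) (Fin N) ℂ) - ptrB Z).PosSemidef ∧
        Z.PosSemidef} ε := by
  obtain ⟨hε0, hε1⟩ := hε
  have hNR : (1:ℝ) < (N:ℝ) := by exact_mod_cast Nat.lt_of_lt_of_le one_lt_two hN
  have hcR : (0:ℝ) ≤ ε / ((N : ℝ) - 1) := div_nonneg hε0 (by linarith)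
  have hcC : (0:ℂ) ≤ (ε : ℂ) / ((N : ℂ) - 1) := by
    rw [← hcc]
    exact_mod_cast Complex.real_le_real.mpr hcR
  have hεC : (0:ℂ) ≤ (ε : ℂ) := by exact_mod_cast Complex.real_le_real.mpr hε0
  constructor
  · -- membership: explicit optimal Z
    refine ⟨Matrix.diagonal (fun p => if p.1 = p.2 then (0:ℂ) else (ε : ℂ) / ((N : ℂ) - 1)),
      ?_, ?_, ?_⟩
    · rw [choiDiff, Matrix.diagonal_sub]
      refine Matrix.PosSemidef.diagonal fun p => ?_
      by_cases h : p.1 = p.2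
      · simpa [h] using hεC
      · simp [h, hcc]
    · have hP : ptrB (Matrix.diagonal
          (fun p : Fin N × Fin N => if p.1 = p.2 then (0:ℂ) else (ε : ℂ) / ((N : ℂ) - 1)))
          = (ε : ℂ) • (1 : Matrix (Fin N) (Fin N) ℂ) := by
        ext μ ν
        simp only [ptrB, Matrix.of_apply, Matrix.smul_apply, Matrix.one_apply, smul_eq_mul]
        by_cases h : μ = ν
        · subst h
          have he : ∀ a : Fin N,
              Matrix.diagonal (fun p : Fin N × Fin N => if p.1 = p.2 then (0:ℂ)
                else (ε : ℂ) / ((N : ℂ) - 1)) (μ, a) (μ, a)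
              = if μ = a then (0:ℂ) else (ε : ℂ) / ((N : ℂ) - 1) :=
            fun a => Matrix.diagonal_apply_eq _ (μ, a)
          rw [Finset.sum_congr rfl fun a _ => he a]
          simpa using key_sum hN ε μ
        · have he : ∀ a : Fin N,
              Matrix.diagonal (fun p : Fin N × Fin N => if p.1 = p.2 then (0:ℂ)
                else (ε : ℂ) / ((N : ℂ) - 1)) (μ, a) (ν, a) = 0 :=
            fun a => Matrix.diagonal_apply_ne _ (by simp [h])
          simp [h, he]
      rw [hP, sub_self]
      exact Matrix.PosSemidef.zero
    · refine Matrix.PosSemidef.diagonal fun p => ?_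
      by_cases h : p.1 = p.2 <;> simp [h, hcC]
  · -- lower bound
    rintro lam ⟨Z, h1, h2, h3⟩
    have hNpos : 0 < N := by omega
    set μ0 : Fin N := ⟨0, hNpos⟩
    have hzd : ∀ a : Fin N, (if μ0 = a then (0:ℂ) else (ε : ℂ) / ((N : ℂ) - 1))
        ≤ Z (μ0, a) (μ0, a) := by
      intro a
      by_cases h : μ0 = a
      · simpa [h] using diag_nonneg' h3 (μ0, a)
      · have hnn := diag_nonneg' h1 (μ0, a)
        have hD : choiDiff N ε (μ0, a) (μ0, a) = (ε : ℂ) / ((N : ℂ) - 1) := by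
          simp only [choiDiff, Matrix.diagonal_apply_eq]
          rw [if_neg h, hcc]
        rw [Matrix.sub_apply, hD, sub_nonneg] at hnn
        rw [if_neg h]
        exact hnn
    have hsum : (ε : ℂ) ≤ ∑ a, Z (μ0, a) (μ0, a) := by
      rw [← key_sum hN ε μ0]
      exact Finset.sum_le_sum fun a _ => hzd a
    have hlam : (ptrB Z) μ0 μ0 ≤ (lam : ℂ) := by
      have hnn := diag_nonneg' h2 μ0
      simp only [Matrix.sub_apply, Matrix.smul_apply, Matrix.one_apply_eq, smul_eq_mul,
        mul_one] at hnn
      exact sub_nonneg.mp hnn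
    have hfin : (ε : ℂ) ≤ (lam : ℂ) := le_trans hsum (by simpa [ptrB] using hlam)
    exact_mod_cast hfin
end
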